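/- For any lists p and y* over a type α with decidable equality and any token a : α, if there is no k < |y*| with D(p, y*_{<k}) = m(p, y*) and y*[k] = a (i.e., a is not an optimal extension of p), then the minimum of D(p ++ (a :: s), y*) over all lists s equals exactly m(p, y*) + 1, where m(p, y*) = min over 0 ≤ j ≤ |y*| of D(p, y*_{<j}). -/

import Mathlib

/-- Costs for the edit distance (as in the older Mathlib's `Levenshtein.Cost`). -/
structure Levenshtein.Cost (α β δ : Type*) where
  /-- Cost to delete an element from a list. -/
  delete : α → δ
  /-- Cost in insert an element into a list. -/
  insert : β → δ
  /-- Cost to substitute one element for another in a list. -/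
  substitute : α → β → δ

/-- The default cost structure, with unit cost for each operation (older Mathlib). -/
def Levenshtein.defaultCost {α : Type*} [DecidableEq α] : Levenshtein.Cost α α ℕ where
  delete _ := 1
  insert _ := 1
  substitute a b := if a = b then 0 else 1

/-- Auxiliary step of `suffixLevenshtein` (older Mathlib's `Levenshtein.impl`). -/
def Levenshtein.impl {α β δ : Type*} [AddZeroClass δ] [Min δ]
    (C : Levenshtein.Cost α β δ)
    (xs : List α) (y : β) (d : {r : List δ // 0 < r.length}) : {r : List δ // 0 < r.length} :=
  let ⟨ds, w⟩ := d
  xs.zip (ds.zip ds.tail) |>.foldr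
    (init := ⟨[C.insert y + ds.getLast (List.ne_nil_of_length_pos w)], by simp⟩)
    (fun ⟨x, d₀, d₁⟩ ⟨r, w⟩ =>
      ⟨min (C.delete x + r[0]) (min (C.insert y + d₀) (C.substitute x y + d₁)) :: r, by simp⟩)

/-- Edit distances between `xs` and all suffixes of `ys` (older Mathlib). -/
def suffixLevenshtein {α β δ : Type*} [AddZeroClass δ] [Min δ]
    (C : Levenshtein.Cost α β δ) (xs : List α) (ys : List β) :
    {r : List δ // 0 < r.length} :=
  ys.foldr
    (Levenshtein.impl C xs)
    (xs.foldr (init := ⟨[0], by simp⟩) (fun a ⟨r, w⟩ => ⟨(C.delete a + r[0]) :: r, by simp⟩))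

/-- The edit distance of older Mathlib's `levenshtein`. -/
def levenshtein {α β δ : Type*} [AddZeroClass δ] [Min δ]
    (C : Levenshtein.Cost α β δ) (xs : List α) (ys : List β) : δ :=
  let ⟨r, w⟩ := suffixLevenshtein C xs ys
  r[0]

/-- Unit-cost Levenshtein edit distance between two lists. -/
def editDist {α : Type*} [DecidableEq α] (u v : List α) : ℕ :=
  levenshtein Levenshtein.defaultCost u v

/-- `rowMin p y = min over 0 ≤ j ≤ |y|` of the edit distance between `p` and `y.take j`. -/
def rowMin {α : Type*} [DecidableEq α] (p y : List α) : ℕ :=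
  (Finset.range (y.length + 1)).inf' (by simp) (fun j => editDist p (y.take j))

namespace LevPort
variable {α β δ : Type*} [AddZeroClass δ] [Min δ] (C : Levenshtein.Cost α β δ)

theorem impl_cons (x : α) (xs : List α) (y : β) (d : δ) (ds : List δ) (w : 0 < (d :: ds).length)
    (w' : 0 < List.length ds) :
    Levenshtein.impl C (x :: xs) y ⟨d :: ds, w⟩ =
      let ⟨r, w⟩ := Levenshtein.impl C xs y ⟨ds, w'⟩
      ⟨min (C.delete x + r[0]) (min (C.insert y + d) (C.substitute x y + ds[0])) :: r, by simp⟩ :=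
  match ds, w' with | _ :: _, _ => rfl

theorem impl_cons_val (x : α) (xs : List α) (y : β) (d : δ) (ds : List δ) (w : 0 < (d :: ds).length)
    (w' : 0 < List.length ds) :
    (Levenshtein.impl C (x :: xs) y ⟨d :: ds, w⟩).1 =
      min (C.delete x + (Levenshtein.impl C xs y ⟨ds, w'⟩).1[0]'(Levenshtein.impl C xs y ⟨ds, w'⟩).2)
        (min (C.insert y + d) (C.substitute x y + ds[0])) :: (Levenshtein.impl C xs y ⟨ds, w'⟩).1 := by
  rw [impl_cons C x xs y d ds w w']

theorem impl_length (xs : List α) (y : β) (d : {r : List δ // 0 < r.length})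
    (w : d.1.length = xs.length + 1) :
    (Levenshtein.impl C xs y d).1.length = xs.length + 1 := by
  induction xs generalizing d with
  | nil => rfl
  | cons x xs ih =>
    match d, w with
    | ⟨d₁ :: d₂ :: ds, _⟩, w =>
      rw [impl_cons_val C x xs y d₁ (d₂ :: ds) (by simp) (by simp)]
      simp only [List.length_cons, ih ⟨d₂ :: ds, (by simp)⟩ (by simpa using w)]

theorem suffixLevenshtein_length (xs : List α) (ys : List β) :
    (suffixLevenshtein C xs ys).1.length = xs.length + 1 := by
  induction ys with
  | nil =>
    induction xs with
    | nil => rfl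
    | cons _ xs ih =>
      show (suffixLevenshtein C xs []).1.length + 1 = _
      rw [ih]; rfl
  | cons y ys ih =>
    exact impl_length C xs y _ ih

theorem lev_eq (xs : List α) (ys : List β) :
    levenshtein C xs ys = (suffixLevenshtein C xs ys).1[0]'(suffixLevenshtein C xs ys).2 := rfl

theorem suffixLevenshtein_cons₁ (x : α) (xs : List α) (ys : List β) :
    suffixLevenshtein C (x :: xs) ys =
      ⟨levenshtein C (x :: xs) ys :: (suffixLevenshtein C xs ys).1, by simp⟩ := by
  induction ys with
  | nil => rfl
  | cons y ys ih =>
    apply Subtype.ext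
    show (Levenshtein.impl C (x :: xs) y (suffixLevenshtein C (x :: xs) ys)).1 = _
    have key : ∀ s : {r : List δ // 0 < r.length}, s = suffixLevenshtein C (x :: xs) ys →
        (Levenshtein.impl C (x :: xs) y s).1.tail =
          (Levenshtein.impl C xs y (suffixLevenshtein C xs ys)).1 := by
      intro s hs
      rw [ih] at hs
      subst hs
      rw [impl_cons_val C x xs y _ _ _ (suffixLevenshtein C xs ys).2]
      rfl
    have e := key _ rfl
    generalize hL : (Levenshtein.impl C (x :: xs) y (suffixLevenshtein C (x :: xs) ys)) = L at e
    obtain ⟨l, hl⟩ := L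
    match l, hl with
    | a :: t, _ =>
      simp only [List.tail_cons] at e
      show a :: t = levenshtein C (x :: xs) (y :: ys) :: (suffixLevenshtein C xs (y :: ys)).1
      rw [e]
      congr 1
      rw [lev_eq]
      show _ = (Levenshtein.impl C (x :: xs) y (suffixLevenshtein C (x :: xs) ys)).1[0]'(Levenshtein.impl C (x :: xs) y (suffixLevenshtein C (x :: xs) ys)).2
      simp only [hL, List.getElem_cons_zero]


theorem levenshtein_cons_cons (x : α) (xs : List α) (y : β) (ys : List β) :
    levenshtein C (x :: xs) (y :: ys) =
      min (C.delete x + levenshtein C xs (y :: ys))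
        (min (C.insert y + levenshtein C (x :: xs) ys)
          (C.substitute x y + levenshtein C xs ys)) := by
  rw [lev_eq C (x :: xs) (y :: ys)]
  show (Levenshtein.impl C (x :: xs) y (suffixLevenshtein C (x :: xs) ys)).1[0]'(Levenshtein.impl C (x :: xs) y (suffixLevenshtein C (x :: xs) ys)).2 = _
  have key : ∀ s : {r : List δ // 0 < r.length}, s = suffixLevenshtein C (x :: xs) ys →
      (Levenshtein.impl C (x :: xs) y s).1[0]'(Levenshtein.impl C (x :: xs) y s).2 =
      min (C.delete x + levenshtein C xs (y :: ys))
        (min (C.insert y + levenshtein C (x :: xs) ys)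
          (C.substitute x y + levenshtein C xs ys)) := by
    intro s hs
    rw [suffixLevenshtein_cons₁] at hs
    subst hs
    simp only [impl_cons_val C x xs y _ _ _ (suffixLevenshtein C xs ys).2, List.getElem_cons_zero]
    rfl
  exact key _ rfl

@[simp] theorem levenshtein_nil_nil : levenshtein C ([] : List α) ([] : List β) = 0 := rfl

@[simp] theorem levenshtein_cons_nil (x : α) (xs : List α) :
    levenshtein C (x :: xs) ([] : List β) = C.delete x + levenshtein C xs [] := rfl

theorem impl_nil_head (y : β) (s : {r : List δ // 0 < r.length}) (h : s.1.length = 1) :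
    (Levenshtein.impl C ([] : List α) y s).1[0]'(Levenshtein.impl C [] y s).2 = C.insert y + s.1[0]'s.2 := by
  obtain ⟨r, hr⟩ := s
  match r, hr, h with
  | [d], _, _ => rfl

@[simp] theorem levenshtein_nil_cons (y : β) (ys : List β) :
    levenshtein C ([] : List α) (y :: ys) = C.insert y + levenshtein C [] ys :=
  impl_nil_head C y _ (suffixLevenshtein_length C [] ys)
end LevPort

open LevPort

namespace EditAux

variable {α : Type*} [DecidableEq α]

theorem cons_cons (x : α) (u : List α) (y : α) (v : List α) :
    editDist (x :: u) (y :: v) =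
      min (1 + editDist u (y :: v))
        (min (1 + editDist (x :: u) v)
          ((if x = y then 0 else 1) + editDist u v)) := by
  simp [editDist, levenshtein_cons_cons, Levenshtein.defaultCost]

theorem nil_right (u : List α) : editDist u [] = u.length := by
  induction u with
  | nil => simp [editDist]
  | cons x u ih => simp [editDist, Levenshtein.defaultCost] at *; omega

theorem nil_left (v : List α) : editDist [] v = v.length := by
  induction v with
  | nil => simp [editDist]
  | cons y v ih => simp [editDist, Levenshtein.defaultCost] at *; omega

theorem self (u : List α) : editDist u u = 0 := by
  induction u with
  | nil => simp [editDist]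
  | cons x u ih => rw [cons_cons]; simp [ih]


theorem del_le (x : α) (u v : List α) : editDist (x :: u) v ≤ 1 + editDist u v := by
  cases v with
  | nil => simp [nil_right]
  | cons y v => rw [cons_cons]; exact min_le_left _ _

theorem ins_le (u : List α) (y : α) (v : List α) :
    editDist u (y :: v) ≤ 1 + editDist u v := by
  cases u with
  | nil => simp [nil_left]
  | cons x u => rw [cons_cons]; exact le_trans (min_le_right _ _) (min_le_left _ _)

theorem sub_le (x : α) (u : List α) (y : α) (v : List α) :
    editDist (x :: u) (y :: v) ≤ 1 + editDist u v := by
  rw [cons_cons]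
  refine le_trans (le_trans (min_le_right _ _) (min_le_right _ _)) ?_
  split <;> omega

theorem eq_of_editDist_eq_zero : ∀ {u v : List α}, editDist u v = 0 → u = v := by
  intro u
  induction u with
  | nil => intro v h; cases v with
    | nil => rfl
    | cons y v => rw [nil_left] at h; simp at h
  | cons x u ih =>
    intro v h
    cases v with
    | nil => rw [nil_right] at h; simp at h
    | cons y v =>
      rw [cons_cons] at h
      rcases Nat.min_eq_zero_iff.mp h with h1 | h1
      · omega
      rcases Nat.min_eq_zero_iff.mp h1 with h2 | h2
      · omega
      · by_cases hxy : x = y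
        · simp [hxy] at h2 ⊢; exact ih h2
        · simp [hxy] at h2

theorem add_le : ∀ (u w v₁ v₂ : List α),
    editDist (u ++ w) (v₁ ++ v₂) ≤ editDist u v₁ + editDist w v₂ := by
  intro u
  induction u with
  | nil =>
    intro w v₁ v₂
    simp only [List.nil_append]
    induction v₁ with
    | nil => simp [nil_left]
    | cons y v₁ ih =>
      calc editDist w (y :: (v₁ ++ v₂)) ≤ 1 + editDist w (v₁ ++ v₂) := ins_le _ _ _
        _ ≤ 1 + (editDist [] v₁ + editDist w v₂) := by omega
        _ = editDist [] (y :: v₁) + editDist w v₂ := by simp [nil_left]; omega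
  | cons x u ihu =>
    intro w v₁
    induction v₁ with
    | nil =>
      intro v₂
      simp only [List.nil_append, List.cons_append]
      calc editDist (x :: (u ++ w)) v₂ ≤ 1 + editDist (u ++ w) v₂ := del_le _ _ _
        _ ≤ 1 + (editDist u [] + editDist w v₂) := by
            have := ihu w [] v₂; simp at this; omega
        _ = editDist (x :: u) [] + editDist w v₂ := by simp [nil_right]; omega
    | cons y v₁ ihv =>
      intro v₂
      rw [List.cons_append, List.cons_append, cons_cons x (u ++ w), cons_cons x u]
      have h1 := ihu w (y :: v₁) v₂
      have h2 := ihv v₂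
      have h3 := ihu w v₁ v₂
      simp only [List.cons_append] at h1 h2 h3 ⊢
      omega

theorem exists_split : ∀ (u v w : List α), ∃ j ≤ v.length,
    editDist u (v.take j) + editDist w (v.drop j) ≤ editDist (u ++ w) v := by
  intro u
  induction u with
  | nil =>
    intro v w
    exact ⟨0, Nat.zero_le _, by simp [nil_left]⟩
  | cons x u ihu =>
    intro v
    induction v with
    | nil =>
      intro w
      refine ⟨0, le_refl _, ?_⟩
      simp [nil_right]
      omega
    | cons y v ihv =>
      intro w
      rw [List.cons_append, cons_cons x (u ++ w)]
      obtain ⟨j1, hj1, h1⟩ := ihu (y :: v) w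
      obtain ⟨j2, hj2, h2⟩ := ihv w
      obtain ⟨j3, hj3, h3⟩ := ihu v w
      simp only [List.cons_append] at h1 h2 h3
      rcases Nat.lt_trichotomy (1 + editDist (u ++ w) (y :: v))
        (min (1 + editDist (x :: (u ++ w)) v)
          ((if x = y then 0 else 1) + editDist (u ++ w) v)) with hm | hm | hm
      · -- delete branch is the min
        refine ⟨j1, hj1, ?_⟩
        have := del_le x u ((y :: v).take j1)
        omega
      · rcases Nat.lt_or_ge (1 + editDist (x :: (u ++ w)) v)
          ((if x = y then 0 else 1) + editDist (u ++ w) v) with hm2 | hm2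
        · refine ⟨j2 + 1, by simpa using hj2, ?_⟩
          simp only [List.take_succ_cons, List.drop_succ_cons]
          have := ins_le (x :: u) y (v.take j2)
          omega
        · refine ⟨j3 + 1, by simpa using hj3, ?_⟩
          simp only [List.take_succ_cons, List.drop_succ_cons]
          have hs : editDist (x :: u) (y :: v.take j3)
              ≤ (if x = y then 0 else 1) + editDist u (v.take j3) := by
            rw [cons_cons]
            exact le_trans (min_le_right _ _) (min_le_right _ _)
          omega
      · rcases Nat.lt_or_ge (1 + editDist (x :: (u ++ w)) v)
          ((if x = y then 0 else 1) + editDist (u ++ w) v) with hm2 | hm2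
        · refine ⟨j2 + 1, by simpa using hj2, ?_⟩
          simp only [List.take_succ_cons, List.drop_succ_cons]
          have := ins_le (x :: u) y (v.take j2)
          omega
        · refine ⟨j3 + 1, by simpa using hj3, ?_⟩
          simp only [List.take_succ_cons, List.drop_succ_cons]
          have hs : editDist (x :: u) (y :: v.take j3)
              ≤ (if x = y then 0 else 1) + editDist u (v.take j3) := by
            rw [cons_cons]
            exact le_trans (min_le_right _ _) (min_le_right _ _)
          omega

theorem rowMin_le (p y : List α) {j : ℕ} (hj : j ≤ y.length) :
    rowMin p y ≤ editDist p (y.take j) :=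
  Finset.inf'_le _ (Finset.mem_range.mpr (by omega))

end EditAux

theorem non_optimal_extension_eq_rowMin_add_one {α : Type*} [DecidableEq α]
    (p ystar : List α) (a : α)
    (h : ¬ ∃ k, ∃ (hk : k < ystar.length),
        editDist p (ystar.take k) = rowMin p ystar ∧ ystar[k] = a) :
    sInf {d | ∃ s : List α, d = editDist (p ++ a :: s) ystar}
      = rowMin p ystar + 1 := by
  push_neg at h
  set m := rowMin p ystar with hm
  -- lower bound
  have lower : ∀ d ∈ {d | ∃ s : List α, d = editDist (p ++ a :: s) ystar}, m + 1 ≤ d := by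
    rintro d ⟨s, rfl⟩
    obtain ⟨j, hj, hsplit⟩ := EditAux.exists_split p ystar (a :: s)
    have hge : m ≤ editDist p (ystar.take j) := EditAux.rowMin_le p ystar hj
    rcases Nat.eq_zero_or_pos (editDist (a :: s) (ystar.drop j)) with h0 | h0
    · have heq := EditAux.eq_of_editDist_eq_zero h0
      have hjlt : j < ystar.length := by
        by_contra hcon
        have : ystar.drop j = [] := List.drop_eq_nil_of_le (by omega)
        rw [this] at heq; exact List.cons_ne_nil _ _ heq
      have hget : ystar[j] = a := by
        rw [List.drop_eq_getElem_cons hjlt] at heq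
        injection heq with h1 _
        exact h1.symm
      have hne := h j hjlt
      rcases Nat.lt_or_ge m (editDist p (ystar.take j)) with hlt | hle
      · omega
      · exact absurd hget (hne (by omega))
    · omega
  -- upper bound: find s achieving m + 1
  obtain ⟨j₀, hj₀mem, hj₀⟩ := Finset.exists_mem_eq_inf' (s := Finset.range (ystar.length + 1))
    (by simp) (fun j => editDist p (ystar.take j))
  have hj₀le : j₀ ≤ ystar.length := by
    have := Finset.mem_range.mp hj₀mem; omega
  have hmem : m + 1 ∈ {d | ∃ s : List α, d = editDist (p ++ a :: s) ystar} := by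
    rcases Nat.lt_or_ge j₀ ystar.length with hlt | hge
    · -- use s = drop (j₀+1)
      refine ⟨ystar.drop (j₀ + 1), ?_⟩
      have hdrop : ystar.drop j₀ = ystar[j₀] :: ystar.drop (j₀ + 1) := by
        rw [List.drop_eq_getElem_cons hlt]
      have hub : editDist (p ++ a :: ystar.drop (j₀ + 1)) ystar ≤ m + 1 := by
        have := EditAux.add_le p (a :: ystar.drop (j₀ + 1)) (ystar.take j₀) (ystar.drop j₀)
        rw [List.take_append_drop] at this
        have h2 : editDist (a :: ystar.drop (j₀ + 1)) (ystar.drop j₀) ≤ 1 := by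
          rw [hdrop]
          calc editDist (a :: ystar.drop (j₀ + 1)) (ystar[j₀] :: ystar.drop (j₀ + 1))
              ≤ 1 + editDist (ystar.drop (j₀ + 1)) (ystar.drop (j₀ + 1)) :=
                EditAux.sub_le _ _ _ _
            _ = 1 := by rw [EditAux.self]
        have hj₀' : rowMin p ystar = editDist p (List.take j₀ ystar) := hj₀
        omega
      have hlb := lower _ ⟨ystar.drop (j₀ + 1), rfl⟩
      omega
    · refine ⟨[], ?_⟩
      have hj₀eq : j₀ = ystar.length := by omega
      have htake : ystar.take j₀ = ystar := by rw [hj₀eq, List.take_length]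
      have hub : editDist (p ++ [a]) ystar ≤ m + 1 := by
        have := EditAux.add_le p [a] ystar []
        rw [List.append_nil] at this
        have hj₀' : rowMin p ystar = editDist p (List.take j₀ ystar) := hj₀
        rw [htake] at hj₀'
        have h1 : editDist [a] ([] : List α) = 1 := by rw [EditAux.nil_right]; rfl
        omega
      have hlb := lower _ ⟨[], rfl⟩
      omega
  exact le_antisymm (csInf_le (OrderBot.bddBelow _) hmem) (le_csInf ⟨_, hmem⟩ lower)
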